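/- Suppose a translation invariant point process on ℤ realizes density ρ and pair correlation g with g(0) = 0, g(±1) = α for some α ≥ 1, and g(x) = 1 for |x| > 1. Then ρ ≤ 1/(2α − 1). -/
import Mathlib


open MeasureTheory

/-- If a translation invariant point process on `ℤ` realizes density `ρ` and
pair correlation `g` with `g(±1) = α`, `α ≥ 1`, and `g(x) = 1` for `|x| > 1`,
then `ρ ≤ 1/(2α - 1)`. -/
theorem density_bound_alpha_ge_one
    (μ : Measure (ℤ → Bool)) [IsProbabilityMeasure μ]
    (hshift : μ.map (fun η (n : ℤ) => η (n + 1)) = μ)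
    (ρ α : ℝ) (hα : 1 ≤ α)
    (hρ : (μ {η | η 0 = true}).toReal = ρ)
    (hpair : ∀ x : ℤ, x ≠ 0 →
      (μ {η | η 0 = true ∧ η x = true}).toReal
        = ρ ^ 2 * (if x = 1 ∨ x = -1 then α else 1)) :
    ρ ≤ 1 / (2 * α - 1) := by
  classical
  have hρ0 : 0 ≤ ρ := hρ ▸ ENNReal.toReal_nonneg
  -- basic measurability
  have hmA : ∀ i : ℤ, MeasurableSet {η : ℤ → Bool | η i = true} := by
    intro i
    have : {η : ℤ → Bool | η i = true} = (fun η : ℤ → Bool => η i) ⁻¹' {true} := by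
      ext η; simp
    rw [this]
    exact measurable_pi_apply i (measurableSet_singleton true)
  have hmP : ∀ i j : ℤ, MeasurableSet {η : ℤ → Bool | η i = true ∧ η j = true} := by
    intro i j
    have : {η : ℤ → Bool | η i = true ∧ η j = true}
        = {η : ℤ → Bool | η i = true} ∩ {η : ℤ → Bool | η j = true} := rfl
    rw [this]; exact (hmA i).inter (hmA j)
  -- the pairwise probabilities
  have h1 := hpair 1 (by norm_num)
  have hm1 := hpair (-1) (by norm_num)
  have h2 := hpair 2 (by norm_num)
  rw [if_pos (Or.inl rfl)] at h1
  have : ((-1 : ℤ) = 1 ∨ (-1 : ℤ) = -1) := Or.inr rfl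
  rw [if_pos this] at hm1
  rw [if_neg (by norm_num)] at h2
  -- translation invariance: μ {η₋₁ ∧ η₁} = μ {η₀ ∧ η₂}
  have hT : Measurable (fun η : ℤ → Bool => fun n : ℤ => η (n + 1)) :=
    measurable_pi_lambda _ fun n => measurable_pi_apply _
  have hshift' : μ {η : ℤ → Bool | η (-1) = true ∧ η 1 = true}
      = μ {η : ℤ → Bool | η 0 = true ∧ η 2 = true} := by
    conv_lhs => rw [← hshift]
    rw [Measure.map_apply hT (hmP (-1) 1)]
    congr 1
  -- pointwise inequality as a measure inequality:
  -- μ(A₀∩A₋₁) + μ(A₀∩A₁) ≤ μ(A₀) + μ(A₋₁∩A₁)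
  set S1 : Set (ℤ → Bool) := {η | η 0 = true ∧ η (-1) = true} with hS1
  set S2 : Set (ℤ → Bool) := {η | η 0 = true ∧ η 1 = true} with hS2
  have hkeyE : μ S1 + μ S2 ≤ μ {η : ℤ → Bool | η 0 = true}
      + μ {η : ℤ → Bool | η (-1) = true ∧ η 1 = true} := by
    have hunion : μ (S1 ∪ S2) + μ (S1 ∩ S2) = μ S1 + μ S2 :=
      measure_union_add_inter S1 (hmP 0 1)
    rw [← hunion]
    gcongr
    · intro η hη
      rcases hη with h | h
      · exact h.1
      · exact h.1
    · rintro η ⟨⟨_, ha⟩, ⟨_, hb⟩⟩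
      exact ⟨ha, hb⟩
  -- pass to real numbers
  have hfin : ∀ s : Set (ℤ → Bool), μ s ≠ ⊤ := fun s => measure_ne_top μ s
  have hkeyR : (μ S1).toReal + (μ S2).toReal
      ≤ (μ {η : ℤ → Bool | η 0 = true}).toReal
        + (μ {η : ℤ → Bool | η (-1) = true ∧ η 1 = true}).toReal := by
    rw [← ENNReal.toReal_add (hfin _) (hfin _), ← ENNReal.toReal_add (hfin _) (hfin _)]
    exact ENNReal.toReal_mono (by simp [ENNReal.add_ne_top, hfin]) hkeyE
  rw [hS1, hS2] at hkeyR
  rw [hm1, h1, hρ, hshift', h2] at hkeyR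
  -- hkeyR : ρ^2*α + ρ^2*α ≤ ρ + ρ^2*1
  rcases hρ0.eq_or_lt with h0 | hpos
  · rw [← h0]
    have h2α : (0:ℝ) < 2 * α - 1 := by linarith
    positivity
  · rw [le_div_iff₀ (by linarith)]
    nlinarith [hkeyR, hpos, sq_nonneg ρ, mul_pos hpos hpos]
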